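/- arXiv:1704.06831 — 2 statements merged into one kernel-verified Lean document; each statement's English description precedes it below -/
import Mathlib

section
/- Let p ∈ (1/3, 1/2) and let S ~ Binomial(m, p). Using the bounds D(a‖p) ≤ (a−p)²/(p(1−p)) for the Bernoulli KL divergence and C(m,k)p^k(1−p)^{m−k} ≥ exp(−m·D(k/m‖p))/√(8m(k/m)(1−k/m)), one has P(S ≤ m/3) ≥ exp(−m·(p − 1/3 + √(2/m))²/(p(1−p))), provided √(2m) is an integer and m ≥ 3. -/
open Real Filter

private lemma aux_sqrt_pi_le_stirling (n : ℕ) :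
    Real.sqrt Real.pi ≤ Stirling.stirlingSeq (n + 1) := by
  have ht : Filter.Tendsto (Stirling.stirlingSeq ∘ Nat.succ) Filter.atTop
      (nhds (Real.sqrt Real.pi)) :=
    Stirling.tendsto_stirlingSeq_sqrt_pi.comp (Filter.tendsto_add_atTop_nat 1)
  exact Stirling.stirlingSeq'_antitone.le_of_tendsto ht n

private lemma aux_fact_lower (n : ℕ) :
    Real.sqrt Real.pi * (Real.sqrt (2 * n) * ((n : ℝ) / Real.exp 1) ^ n)
      ≤ n.factorial := by
  cases n with
  | zero => simp
  | succ k =>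
    have hD : 0 < Real.sqrt (2 * (k + 1 : ℕ)) * (((k + 1 : ℕ) : ℝ) / Real.exp 1) ^ (k + 1) := by
      positivity
    have h := aux_sqrt_pi_le_stirling k
    rw [Stirling.stirlingSeq, le_div_iff₀ hD] at h
    exact h

private lemma aux_fact_upper (n : ℕ) (hn : 1 ≤ n) :
    (n.factorial : ℝ) ≤ Real.exp 1 * Real.sqrt n * ((n : ℝ) / Real.exp 1) ^ n := by
  obtain ⟨k, rfl⟩ : ∃ k, n = k + 1 := ⟨n - 1, by omega⟩
  have hD : 0 < Real.sqrt (2 * (k + 1 : ℕ)) * (((k + 1 : ℕ) : ℝ) / Real.exp 1) ^ (k + 1) := by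
    positivity
  have h : Stirling.stirlingSeq (k + 1) ≤ Stirling.stirlingSeq 1 := by
    have := Stirling.stirlingSeq'_antitone (Nat.zero_le k)
    simpa using this
  rw [Stirling.stirlingSeq_one, Stirling.stirlingSeq, div_le_div_iff₀ hD (by positivity)] at h
  have hs2 : Real.sqrt (2 * ((k:ℝ) + 1)) = Real.sqrt 2 * Real.sqrt ((k:ℝ) + 1) :=
    Real.sqrt_mul (by norm_num) _
  have h2 : (0:ℝ) < Real.sqrt 2 := by positivity
  rw [← mul_le_mul_iff_left₀ h2]
  calc ((k + 1).factorial : ℝ) * Real.sqrt 2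
      ≤ Real.exp 1 * (Real.sqrt (2 * (k + 1 : ℕ)) * (((k + 1 : ℕ) : ℝ) / Real.exp 1) ^ (k + 1)) := h
    _ = Real.exp 1 * Real.sqrt ((k + 1 : ℕ)) * (((k + 1 : ℕ) : ℝ) / Real.exp 1) ^ (k + 1)
          * Real.sqrt 2 := by
        push_cast [hs2] at *
        rw [hs2]
        ring

private lemma aux_exp_one_sub_inv_le {x : ℝ} (hx : 0 < x) : Real.exp (1 - x⁻¹) ≤ x := by
  have h2 : x⁻¹ ≤ Real.exp (x⁻¹ - 1) := by
    have := Real.add_one_le_exp (x⁻¹ - 1); linarith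
  have h3 : Real.exp (1 - x⁻¹) = (Real.exp (x⁻¹ - 1))⁻¹ := by
    rw [← Real.exp_neg]; ring_nf
  rw [h3]
  calc (Real.exp (x⁻¹ - 1))⁻¹ ≤ (x⁻¹)⁻¹ := by
        exact inv_anti₀ (by positivity) h2
    _ = x := inv_inv x

private lemma aux_exp_le_pow {x : ℝ} (hx : 0 < x) (n : ℕ) :
    Real.exp (n * (1 - x⁻¹)) ≤ x ^ n := by
  rw [Real.exp_nat_mul]
  exact pow_le_pow_left₀ (Real.exp_pos _).le (aux_exp_one_sub_inv_le hx) n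

private lemma aux_term_lb (m k : ℕ) (p : ℝ) (hp : 1 / 3 < p) (hp2 : p < 1 / 2)
    (hk1 : 1 ≤ k) (hk3 : 3 * k ≤ m) :
    Real.exp (-(m : ℝ) * (p - k / m) ^ 2 / (p * (1 - p))) / Real.sqrt (2 * m)
      ≤ (m.choose k : ℝ) * p ^ k * (1 - p) ^ (m - k) := by
  have hkm : k ≤ m := by omega
  have hmk : 1 ≤ m - k := by omega
  have hm0 : (0:ℝ) < m := by exact_mod_cast (by omega : 0 < m)
  have hk0 : (0:ℝ) < k := by exact_mod_cast hk1
  have hmk0 : (0:ℝ) < ((m - k : ℕ) : ℝ) := by exact_mod_cast hmk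
  have hcast : ((m - k : ℕ) : ℝ) = (m : ℝ) - k := by
    push_cast [Nat.cast_sub hkm]; ring
  have hp0 : 0 < p := by linarith
  have hq0 : 0 < 1 - p := by linarith
  have he : (0:ℝ) < Real.exp 1 := Real.exp_pos 1
  set e := Real.exp 1 with he_def
  set q := 1 - p with hq_def
  set A := -(m : ℝ) * (p - k / m) ^ 2 / (p * q) with hA_def
  -- reduce to a multiplied-out inequality
  rw [Nat.cast_choose ℝ hkm, div_mul_eq_mul_div, div_mul_eq_mul_div,
    div_le_div_iff₀ (Real.sqrt_pos.mpr (by positivity)) (by positivity)]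
  -- key pointwise exponential bound
  have key : Real.exp A ≤ ((m * p) / k) ^ k * ((m * q) / ((m - k : ℕ) : ℝ)) ^ (m - k) := by
    have e1 : Real.exp ((k : ℝ) * (1 - ((m * p) / k)⁻¹)) ≤ ((m * p) / k) ^ k :=
      aux_exp_le_pow (by positivity) k
    have e2 : Real.exp (((m - k : ℕ) : ℝ) * (1 - ((m * q) / ((m - k : ℕ) : ℝ))⁻¹))
        ≤ ((m * q) / ((m - k : ℕ) : ℝ)) ^ (m - k) :=
      aux_exp_le_pow (by positivity) (m - k)
    calc Real.exp A
        = Real.exp ((k : ℝ) * (1 - ((m * p) / k)⁻¹)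
            + ((m - k : ℕ) : ℝ) * (1 - ((m * q) / ((m - k : ℕ) : ℝ))⁻¹)) := by
          congr 1
          rw [hcast, hA_def, hq_def]
          field_simp [(by linarith : (0:ℝ) < 1 - p).ne']
          ring
      _ = Real.exp ((k : ℝ) * (1 - ((m * p) / k)⁻¹))
            * Real.exp (((m - k : ℕ) : ℝ) * (1 - ((m * q) / ((m - k : ℕ) : ℝ))⁻¹)) :=
          Real.exp_add _ _
      _ ≤ _ := mul_le_mul e1 e2 (Real.exp_pos _).le (by positivity)
  -- numeric Stirling-prefactor bound
  have hnum : e * Real.sqrt k * (e * Real.sqrt ((m - k : ℕ) : ℝ))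
      ≤ Real.sqrt Real.pi * (2 * m) := by
    have h3 : 3 * (k : ℝ) ≤ m := by exact_mod_cast hk3
    have h1 : (k : ℝ) * ((m - k : ℕ) : ℝ) ≤ 2 / 9 * (m : ℝ) ^ 2 := by
      rw [hcast]; nlinarith [h3, hk0]
    have h2 : Real.sqrt ((k : ℝ) * ((m - k : ℕ) : ℝ)) ≤ Real.sqrt (2 / 9) * m := by
      rw [show Real.sqrt (2 / 9) * (m:ℝ) = Real.sqrt (2 / 9 * (m:ℝ) ^ 2) from by
        rw [Real.sqrt_mul (by norm_num), Real.sqrt_sq hm0.le]]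
      exact Real.sqrt_le_sqrt h1
    have h4 : e ^ 2 * Real.sqrt (2 / 9) ≤ 2 * Real.sqrt Real.pi := by
      have hlhs : e ^ 2 * Real.sqrt (2 / 9) = Real.sqrt (e ^ 4 * (2 / 9)) := by
        rw [Real.sqrt_mul (by positivity), show e ^ 4 = (e ^ 2) ^ 2 from by ring,
          Real.sqrt_sq (by positivity)]
      have hrhs : 2 * Real.sqrt Real.pi = Real.sqrt (4 * Real.pi) := by
        rw [Real.sqrt_mul (by norm_num), show (4:ℝ) = 2 ^ 2 from by norm_num,
          Real.sqrt_sq (by norm_num)]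
      rw [hlhs, hrhs]
      apply Real.sqrt_le_sqrt
      have hd9 := Real.exp_one_lt_d9
      have hpi := Real.pi_gt_d6
      have he4 : e ^ 4 < 2.7182818286 ^ 4 := by
        apply pow_lt_pow_left₀ hd9 he.le
        norm_num
      nlinarith [he4, hpi]
    calc e * Real.sqrt k * (e * Real.sqrt ((m - k : ℕ) : ℝ))
        = e ^ 2 * Real.sqrt ((k : ℝ) * ((m - k : ℕ) : ℝ)) := by
          rw [Real.sqrt_mul hk0.le]; ring
      _ ≤ e ^ 2 * (Real.sqrt (2 / 9) * m) := by
          exact mul_le_mul_of_nonneg_left h2 (by positivity)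
      _ = e ^ 2 * Real.sqrt (2 / 9) * m := by ring
      _ ≤ 2 * Real.sqrt Real.pi * m := mul_le_mul_of_nonneg_right h4 hm0.le
      _ = Real.sqrt Real.pi * (2 * m) := by ring
  have hup_k : (k.factorial : ℝ) ≤ e * Real.sqrt k * ((k : ℝ) / e) ^ k :=
    aux_fact_upper k hk1
  have hup_mk : ((m - k).factorial : ℝ)
      ≤ e * Real.sqrt ((m - k : ℕ) : ℝ) * (((m - k : ℕ) : ℝ) / e) ^ (m - k) :=
    aux_fact_upper (m - k) hmk
  have hlow : Real.sqrt Real.pi * (Real.sqrt (2 * m) * ((m : ℝ) / e) ^ m)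
      ≤ m.factorial := aux_fact_lower m
  calc Real.exp A * ((k.factorial : ℝ) * ((m - k).factorial : ℝ))
      ≤ Real.exp A * ((e * Real.sqrt k * ((k : ℝ) / e) ^ k)
          * (e * Real.sqrt ((m - k : ℕ) : ℝ) * (((m - k : ℕ) : ℝ) / e) ^ (m - k))) := by
        apply mul_le_mul_of_nonneg_left _ (Real.exp_pos _).le
        exact mul_le_mul hup_k hup_mk (by positivity) (by positivity)
    _ = (e * Real.sqrt k * (e * Real.sqrt ((m - k : ℕ) : ℝ)))
          * (Real.exp A * (((k : ℝ) / e) ^ k * (((m - k : ℕ) : ℝ) / e) ^ (m - k))) := by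
        ring
    _ ≤ (Real.sqrt Real.pi * (2 * m)) * (((m * p) / e) ^ k * ((m * q) / e) ^ (m - k)) := by
        apply mul_le_mul hnum ?_ (by positivity) (by positivity)
        have expand : (((m : ℝ) * p) / e) ^ k * (((m : ℝ) * q) / e) ^ (m - k)
            = (((m * p) / k) ^ k * ((m * q) / ((m - k : ℕ) : ℝ)) ^ (m - k))
              * (((k : ℝ) / e) ^ k * (((m - k : ℕ) : ℝ) / e) ^ (m - k)) := by
          rw [show (((m * p) / k) ^ k * ((m * q) / ((m - k : ℕ) : ℝ)) ^ (m - k))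
              * (((k : ℝ) / e) ^ k * (((m - k : ℕ) : ℝ) / e) ^ (m - k))
              = ((m * p) / k * ((k : ℝ) / e)) ^ k
                * ((m * q) / ((m - k : ℕ) : ℝ) * (((m - k : ℕ) : ℝ) / e)) ^ (m - k) from by
            rw [mul_pow, mul_pow]; ring]
          have hne : (m:ℝ) - k ≠ 0 := by rw [← hcast]; exact hmk0.ne'
          congr 2
          · field_simp
          · field_simp [hne]
        rw [expand]
        exact mul_le_mul_of_nonneg_right key (by positivity)
    _ = Real.sqrt Real.pi * (Real.sqrt (2 * m) * ((m : ℝ) / e) ^ m)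
          * (p ^ k * q ^ (m - k) * Real.sqrt (2 * m)) := by
        have h5 : Real.sqrt (2 * (m : ℝ)) * Real.sqrt (2 * (m : ℝ)) = 2 * m :=
          Real.mul_self_sqrt (by positivity)
        have h6 : ((m : ℝ) / e) ^ k * ((m : ℝ) / e) ^ (m - k) = ((m : ℝ) / e) ^ m := by
          rw [← pow_add]; congr 1; omega
        have h7 : Real.sqrt Real.pi * (2 * (m:ℝ))
            = Real.sqrt Real.pi * Real.sqrt (2 * (m:ℝ)) * Real.sqrt (2 * (m:ℝ)) := by
          rw [mul_assoc, h5]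
        rw [h7, show ((m : ℝ) * p) / e = ((m : ℝ) / e) * p from by ring,
          show ((m : ℝ) * q) / e = ((m : ℝ) / e) * q from by ring, mul_pow, mul_pow, ← h6]
        ring
    _ ≤ (m.factorial : ℝ) * (p ^ k * q ^ (m - k) * Real.sqrt (2 * m)) :=
        mul_le_mul_of_nonneg_right hlow (by positivity)
    _ = (m.factorial : ℝ) * p ^ k * q ^ (m - k) * Real.sqrt (2 * m) := by ring

open Finset in
/-- Binomial left-tail lower bound via the KL divergence (Step 1 of the proof
of Theorem 3): P(S ≤ m/3) ≥ exp(−m(p − 1/3 + √(2/m))²/(p(1−p))). -/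
theorem binomial_tail_kl_lower_bound (m : ℕ) (p : ℝ)
    (hp : 1 / 3 < p) (hp2 : p < 1 / 2) (hm : 3 ≤ m)
    (hsq : ∃ j : ℕ, (j : ℝ) = Real.sqrt (2 * m)) :
    ∑ k ∈ (Finset.range (m + 1)).filter (fun k : ℕ => (k : ℝ) ≤ m / 3),
      (m.choose k : ℝ) * p ^ k * (1 - p) ^ (m - k)
      ≥ Real.exp (-(m : ℝ) * (p - 1 / 3 + Real.sqrt (2 / m)) ^ 2 /
          (p * (1 - p))) := by
  rw [ge_iff_le]
  obtain ⟨j, hj⟩ := hsq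
  have hp0 : 0 < p := by linarith
  have hq0 : 0 < 1 - p := by linarith
  have hm0 : (0:ℝ) < m := by exact_mod_cast (by omega : 0 < m)
  by_cases h18 : m ≤ 18
  · -- single term k = 0 suffices
    have hmem : 0 ∈ (Finset.range (m + 1)).filter (fun k : ℕ => (k : ℝ) ≤ m / 3) := by
      simp only [Finset.mem_filter, Finset.mem_range]
      refine ⟨by omega, ?_⟩
      push_cast
      positivity
    have hle := Finset.single_le_sum
      (f := fun k : ℕ => (m.choose k : ℝ) * p ^ k * (1 - p) ^ (m - k))
      (fun i _ => by positivity) hmem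
    refine le_trans ?_ hle
    simp only [Nat.choose_zero_right, pow_zero, Nat.cast_one, one_mul, Nat.sub_zero, mul_one]
    have hc : p ≤ p - 1 / 3 + Real.sqrt (2 / m) := by
      have h13 : (1:ℝ) / 3 ≤ Real.sqrt (2 / m) := by
        rw [show (1:ℝ) / 3 = Real.sqrt ((1/3)^2) from by
          rw [Real.sqrt_sq (by norm_num)]]
        apply Real.sqrt_le_sqrt
        rw [show ((1:ℝ)/3)^2 = 1/9 from by norm_num, div_le_div_iff₀ (by norm_num) hm0]
        have : (m:ℝ) ≤ 18 := by exact_mod_cast h18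
        linarith
      linarith
    have hqm : Real.exp (-(m:ℝ) * p ^ 2 / (p * (1 - p))) ≤ (1 - p) ^ m := by
      have h1 : Real.exp (1 - (1 - p)⁻¹) ≤ 1 - p := aux_exp_one_sub_inv_le hq0
      calc Real.exp (-(m:ℝ) * p ^ 2 / (p * (1 - p)))
          = Real.exp ((m:ℝ) * (1 - (1 - p)⁻¹)) := by
            congr 1
            field_simp
            ring
        _ = Real.exp (1 - (1 - p)⁻¹) ^ m := Real.exp_nat_mul _ m
        _ ≤ (1 - p) ^ m := pow_le_pow_left₀ (Real.exp_pos _).le h1 m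
    refine le_trans ?_ hqm
    apply Real.exp_le_exp.mpr
    rw [div_le_div_iff₀ (by positivity) (by positivity)]
    have hsq2 : p ^ 2 ≤ (p - 1 / 3 + Real.sqrt (2 / m)) ^ 2 :=
      pow_le_pow_left₀ hp0.le hc 2
    have hmul := mul_le_mul_of_nonneg_left hsq2
      (by positivity : (0:ℝ) ≤ (m:ℝ) * (p * (1 - p)))
    nlinarith [hmul]
  · -- main case: m ≥ 19, use √(2m) terms
    push_neg at h18
    have hj2 : (j:ℝ) * j = 2 * m := by
      rw [hj]; exact Real.mul_self_sqrt (by positivity)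
    have hjj : j * j = 2 * m := by exact_mod_cast hj2
    have hj7 : 7 ≤ j := by
      by_contra hcon
      push_neg at hcon
      have : j * j ≤ 6 * 6 := Nat.mul_le_mul (by omega) (by omega)
      omega
    have h7j : 7 * j ≤ 2 * m := by
      calc 7 * j ≤ j * j := Nat.mul_le_mul_right j hj7
        _ = 2 * m := hjj
    set k1 := m / 3 with hk1_def
    have h3k1 : 3 * k1 ≤ m ∧ m ≤ 3 * k1 + 2 := by omega
    have hjk1 : j + 1 ≤ k1 + 1 ∧ j ≤ k1 := by omega
    set K := Finset.Ico (k1 + 1 - j) (k1 + 1) with hK_def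
    have hKcard : K.card = j := by rw [hK_def, Nat.card_Ico]; omega
    have hKsub : K ⊆ (Finset.range (m + 1)).filter (fun k : ℕ => (k : ℝ) ≤ m / 3) := by
      intro x hx
      rw [hK_def, Finset.mem_Ico] at hx
      simp only [Finset.mem_filter, Finset.mem_range]
      constructor
      · omega
      · rw [le_div_iff₀ (by norm_num : (0:ℝ) < 3)]
        have h3x : (3:ℝ) * x ≤ m := by exact_mod_cast (by omega : 3 * x ≤ m)
        linarith
    have hsqrt2m' : Real.sqrt (2 / m) = j / m := by
      rw [show (2:ℝ) / m = 2 * m / m ^ 2 from by field_simp,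
        Real.sqrt_div (by positivity), Real.sqrt_sq hm0.le, ← hj]
    set B := Real.exp (-(m : ℝ) * (p - 1 / 3 + Real.sqrt (2 / m)) ^ 2 / (p * (1 - p)))
      with hB_def
    have hterm : ∀ x ∈ K, B / (j : ℝ) ≤ (m.choose x : ℝ) * p ^ x * (1 - p) ^ (m - x) := by
      intro x hx
      rw [hK_def, Finset.mem_Ico] at hx
      have hx1 : 1 ≤ x := by omega
      have hx3 : 3 * x ≤ m := by omega
      refine le_trans ?_ (aux_term_lb m x p hp hp2 hx1 hx3)
      rw [← hj]
      have hj0 : (0:ℝ) < j := by exact_mod_cast (by omega : 0 < j)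
      apply div_le_div_of_nonneg_right ?_ hj0.le
      rw [hB_def]
      apply Real.exp_le_exp.mpr
      rw [div_le_div_iff₀ (by positivity) (by positivity)]
      have hx_ub : (x:ℝ) / m ≤ 1 / 3 := by
        rw [div_le_div_iff₀ hm0 (by norm_num)]
        have h3x : (x:ℝ) * 3 ≤ m := by exact_mod_cast (by omega : x * 3 ≤ m)
        linarith
      have hx_lb : (1:ℝ) / 3 - Real.sqrt (2 / m) ≤ (x:ℝ) / m := by
        rw [hsqrt2m']
        rw [sub_le_iff_le_add, ← add_div, div_le_div_iff₀ (by norm_num) hm0]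
        -- 1 * m ≤ (x + j) * 3
        have hxlow : k1 + 1 - j ≤ x := hx.1
        have h3 : m ≤ 3 * (x + j) := by omega
        calc (1:ℝ) * m = (m:ℝ) := by ring
          _ ≤ 3 * ((x:ℝ) + j) := by exact_mod_cast (by omega : m ≤ 3 * (x + j))
          _ = ((x:ℝ) + j) * 3 := by ring
      have hdiff : 0 ≤ p - (x:ℝ) / m := by linarith
      have hdiff2 : p - (x:ℝ) / m ≤ p - 1 / 3 + Real.sqrt (2 / m) := by linarith
      have hsq2 : (p - (x:ℝ) / m) ^ 2 ≤ (p - 1 / 3 + Real.sqrt (2 / m)) ^ 2 :=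
        pow_le_pow_left₀ hdiff hdiff2 2
      have hmul := mul_le_mul_of_nonneg_left hsq2
        (by positivity : (0:ℝ) ≤ (m:ℝ) * (p * (1 - p)))
      nlinarith [hmul]
    have hsum := Finset.card_nsmul_le_sum K
      (fun k : ℕ => (m.choose k : ℝ) * p ^ k * (1 - p) ^ (m - k)) (B / j) hterm
    rw [hKcard, nsmul_eq_mul] at hsum
    have hBj : (j:ℝ) * (B / j) = B := by
      field_simp
    rw [hBj] at hsum
    refine le_trans hsum ?_
    exact Finset.sum_le_sum_of_subset_of_nonneg hKsub (fun i _ _ => by positivity)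
end

section
/- For any integers m ≥ 1 and 1 ≤ k ≤ m−1 and any p ∈ (0,1), C(m,k)·p^k·(1−p)^{m−k} ≥ exp(−m·D(k/m ‖ p)) / √(8m·(k/m)·(1−k/m)), where D(a‖p) = a·log(a/p) + (1−a)·log((1−a)/(1−p)). -/
open Real


noncomputable def Fash : ℝ → ℝ := fun x => (x + 1/2) * (Real.log (x+1) - Real.log x)

lemma Fash_def : Fash = fun x => (x + 1/2) * (Real.log (x+1) - Real.log x) := rfl

lemma log_le_half (u : ℝ) (hu : 1 ≤ u) : Real.log u ≤ (u - u⁻¹)/2 := by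
  rw [← Real.sinh_log (by linarith)]
  exact Real.self_le_sinh_iff.2 (Real.log_nonneg hu)

lemma hasDerivF (x : ℝ) (hx : 0 < x) :
    HasDerivAt Fash ((Real.log (x+1) - Real.log x) + (x + 1/2) * (1/(x+1) - 1/x)) x := by
  have h1 : HasDerivAt (fun y : ℝ => y + 1/2) 1 x := (hasDerivAt_id x).add_const _
  have h2 : HasDerivAt (fun y : ℝ => Real.log (y+1) - Real.log y) (1/(x+1) - 1/x) x := by
    have ha : HasDerivAt (fun y : ℝ => Real.log (y+1)) (1/(x+1)) x := by
      have := (Real.hasDerivAt_log (by linarith : x + 1 ≠ 0)).comp x ((hasDerivAt_id x).add_const 1)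
      simpa [one_div, Function.comp_def] using this
    have hb : HasDerivAt Real.log x⁻¹ x := Real.hasDerivAt_log hx.ne'
    have h := ha.sub hb
    rw [show (1:ℝ)/x = x⁻¹ from one_div x]
    exact h
  have h3 := h1.mul h2
  have : (Real.log (x+1) - Real.log x) + (x + 1/2) * (1/(x+1) - 1/x)
      = 1 * (Real.log (x+1) - Real.log x) + (x + 1/2) * (1/(x+1) - 1/x) := by ring
  rw [this]
  exact h3

lemma derivF_nonpos (x : ℝ) (hx : 0 < x) : deriv Fash x ≤ 0 := by
  rw [(hasDerivF x hx).deriv]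
  have hu1 : (1:ℝ) ≤ (x+1)/x := by
    rw [le_div_iff₀ hx]; linarith
  have h := log_le_half ((x+1)/x) hu1
  have hlog : Real.log ((x+1)/x) = Real.log (x+1) - Real.log x :=
    Real.log_div (by linarith) hx.ne'
  have hinv : ((x+1)/x)⁻¹ = x/(x+1) := by rw [inv_div]
  rw [hlog, hinv] at h
  have hx1 : (0:ℝ) < x + 1 := by linarith
  have key : ((x+1)/x - x/(x+1))/2 = (x + 1/2) * (1/x - 1/(x+1)) := by
    field_simp; ring
  rw [key] at h
  nlinarith [h]

lemma F_anti : AntitoneOn Fash (Set.Ici (1:ℝ)) := by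
  apply antitoneOn_of_deriv_nonpos (convex_Ici 1)
  · apply ContinuousOn.mul (by fun_prop)
    apply ContinuousOn.sub
    · exact (Real.continuousOn_log.comp (by fun_prop) (fun y hy => by
        simp only [Set.mem_Ici] at hy; simp; intro h; linarith))
    · exact Real.continuousOn_log.mono (fun y hy => by
        simp only [Set.mem_Ici] at hy; simp; linarith)
  · intro y hy
    rw [interior_Ici] at hy
    exact (hasDerivF y (by simp at hy; linarith)).differentiableAt.differentiableWithinAt
  · intro y hy
    rw [interior_Ici] at hy
    exact derivF_nonpos y (by simp at hy; linarith)


lemma expF_eq (n : ℕ) (hn : 1 ≤ n) :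
    Real.exp (Fash n) = (((n:ℝ)+1)/n)^n * Real.sqrt (((n:ℝ)+1)/n) := by
  have hn0 : (0:ℝ) < n := by exact_mod_cast hn
  have hu : (0:ℝ) < ((n:ℝ)+1)/n := by positivity
  have hL : Real.log (((n:ℝ)+1)/n) = Real.log ((n:ℝ)+1) - Real.log n :=
    Real.log_div (by linarith) hn0.ne'
  set L := Real.log (((n:ℝ)+1)/n) with hLdef
  have h1 : Fash n = (n:ℝ) * L + L/2 := by rw [Fash_def]; simp only; rw [← hL]; ring
  rw [h1, Real.exp_add, Real.exp_nat_mul, Real.exp_log hu, Real.exp_half, Real.exp_log hu]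

lemma G_anti (j m : ℕ) (hj : 1 ≤ j) (hjm : j ≤ m) :
    (((m:ℝ)+1)/m)^m * Real.sqrt (((m:ℝ)+1)/m) ≤ (((j:ℝ)+1)/j)^j * Real.sqrt (((j:ℝ)+1)/j) := by
  rw [← expF_eq j hj, ← expF_eq m (hj.trans hjm), Real.exp_le_exp]
  exact F_anti (by simp; exact_mod_cast hj) (by simp; exact_mod_cast hj.trans hjm)
    (by exact_mod_cast hjm)


lemma sqrt8_eq : Real.sqrt 8 = 2 * Real.sqrt 2 := by
  rw [show (8:ℝ) = 2^2 * 2 by norm_num, Real.sqrt_mul (by positivity), Real.sqrt_sq (by norm_num)]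

lemma key (k j : ℕ) (hk : 1 ≤ k) (hj : 1 ≤ j) :
    ((k+j : ℕ) : ℝ)^(k+j) ≤ (((k+j).choose k : ℕ) : ℝ) * (k:ℝ)^k * (j:ℝ)^j
      * Real.sqrt (8*k*j/(k+j)) := by
  induction j, hj using Nat.le_induction with
  | base =>
    have hk0 : (0:ℝ) < k := by exact_mod_cast hk
    have hk1 : (0:ℝ) < (k:ℝ) + 1 := by linarith
    have hG := G_anti 1 k le_rfl hk
    rw [show ((((1:ℕ):ℝ))+1)/((1:ℕ):ℝ) = 2 by norm_num, pow_one] at hG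
    -- hG : ((k+1)/k)^k * √((k+1)/k) ≤ 2 * √2
    have hq : (0:ℝ) < Real.sqrt (((k:ℝ)+1)/k) := Real.sqrt_pos.2 (by positivity)
    have hs : Real.sqrt (8*(k:ℝ)*1/((k:ℝ)+1)) * Real.sqrt (((k:ℝ)+1)/k) = 2 * Real.sqrt 2 := by
      rw [← Real.sqrt_mul (by positivity), ← sqrt8_eq]
      congr 1
      field_simp
    have h2 : (((k:ℝ)+1)/k)^k * Real.sqrt (((k:ℝ)+1)/k)
        ≤ Real.sqrt (8*(k:ℝ)*1/((k:ℝ)+1)) * Real.sqrt (((k:ℝ)+1)/k) := by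
      rw [hs]; exact hG
    have h3 : (((k:ℝ)+1)/k)^k ≤ Real.sqrt (8*(k:ℝ)*1/((k:ℝ)+1)) :=
      le_of_mul_le_mul_right h2 hq
    have h4 : ((k:ℝ)+1)^k ≤ (k:ℝ)^k * Real.sqrt (8*(k:ℝ)*1/((k:ℝ)+1)) := by
      have := mul_le_mul_of_nonneg_left h3 (le_of_lt (pow_pos hk0 k))
      calc ((k:ℝ)+1)^k = (k:ℝ)^k * (((k:ℝ)+1)/k)^k := by
            rw [div_pow]; field_simp
        _ ≤ _ := this
    rw [Nat.choose_succ_self_right]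
    push_cast
    calc ((k:ℝ)+1)^(k+1) = ((k:ℝ)+1) * ((k:ℝ)+1)^k := by ring
      _ ≤ ((k:ℝ)+1) * ((k:ℝ)^k * Real.sqrt (8*(k:ℝ)*1/((k:ℝ)+1))) :=
          mul_le_mul_of_nonneg_left h4 (le_of_lt hk1)
      _ = ((k:ℝ)+1) * (k:ℝ)^k * 1^1 * Real.sqrt (8*(k:ℝ)*1/((k:ℝ)+1)) := by ring
  | succ j hj ih =>
    have hk0 : (0:ℝ) < k := by exact_mod_cast hk
    have hj0 : (0:ℝ) < j := by exact_mod_cast hj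
    set M := k + j with hM
    have hMcast : (M:ℝ) = (k:ℝ) + j := by rw [hM]; push_cast; ring
    have hM0 : (0:ℝ) < M := by rw [hMcast]; linarith
    have hjM : j ≤ M := Nat.le_add_left j k
    have hCC : (M+1).choose k * (j+1) = (M+1) * M.choose k := by
      have h1 : (M+1).choose k = (M+1).choose (j+1) := by
        rw [← Nat.choose_symm (show k ≤ M+1 by omega)]
        congr 1
        omega
      have h2 : (M+1) * M.choose j = (M+1).choose (j+1) * (j+1) :=
        Nat.add_one_mul_choose_eq M j
      have h3 : M.choose j = M.choose k := by
        rw [show j = M - k from by omega]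
        exact Nat.choose_symm (by omega)
      rw [h1, ← h2, h3]
    set S1 := Real.sqrt (8*(k:ℝ)*j/((k:ℝ)+j)) with hS1
    set S2 := Real.sqrt (8*(k:ℝ)*((j:ℝ)+1)/((M:ℝ)+1)) with hS2
    have hS1p : 0 < S1 := Real.sqrt_pos.2 (by positivity)
    have hS2p : 0 < S2 := Real.sqrt_pos.2 (by positivity)
    set q1 := Real.sqrt (((j:ℝ)+1)/j) with hq1
    set q2 := Real.sqrt (((M:ℝ)+1)/M) with hq2
    have hq1p : 0 < q1 := Real.sqrt_pos.2 (by positivity)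
    have hq2p : 0 < q2 := Real.sqrt_pos.2 (by positivity)
    have hid : q1 * S1 = q2 * S2 := by
      rw [hq1, hq2, hS1, hS2, ← Real.sqrt_mul (by positivity), ← Real.sqrt_mul (by positivity)]
      congr 1
      rw [hMcast]
      have hkj : (0:ℝ) < (k:ℝ) + j := by linarith
      field_simp
    set a := (((M:ℝ)+1)/M)^M with ha
    set b := (((j:ℝ)+1)/j)^j with hb
    have hG : a * q2 ≤ b * q1 := G_anti j M hj hjM
    have h2 : a * S1 ≤ b * S2 := by
      have h3 : q1 * (a * S1) ≤ q1 * (b * S2) := by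
        have h4 := mul_le_mul_of_nonneg_right hG (le_of_lt hS2p)
        calc q1 * (a * S1) = a * (q1 * S1) := by ring
          _ = a * (q2 * S2) := by rw [hid]
          _ = a * q2 * S2 := by ring
          _ ≤ b * q1 * S2 := h4
          _ = q1 * (b * S2) := by ring
      exact le_of_mul_le_mul_left h3 hq1p
    have hIH : ((M:ℝ))^M ≤ (M.choose k : ℝ) * (k:ℝ)^k * (j:ℝ)^j * S1 := by
      exact ih
    have h5 : ((M:ℝ))^M * a ≤ (M.choose k : ℝ) * (k:ℝ)^k * (j:ℝ)^j * b * S2 := by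
      have h7 : (((M:ℝ))^M * a) * S1 ≤ ((M.choose k : ℝ) * (k:ℝ)^k * (j:ℝ)^j * b * S2) * S1 := by
        calc (((M:ℝ))^M * a) * S1 = ((M:ℝ))^M * (a * S1) := by ring
          _ ≤ ((M:ℝ))^M * (b * S2) :=
              mul_le_mul_of_nonneg_left h2 (le_of_lt (pow_pos hM0 M))
          _ ≤ ((M.choose k : ℝ) * (k:ℝ)^k * (j:ℝ)^j * S1) * (b * S2) := by
              apply mul_le_mul_of_nonneg_right hIH (by positivity)
          _ = ((M.choose k : ℝ) * (k:ℝ)^k * (j:ℝ)^j * b * S2) * S1 := by ring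
      exact le_of_mul_le_mul_right h7 hS1p
    have goalcast : (k + (j+1)) = M + 1 := by omega
    rw [goalcast]
    push_cast
    rw [show (k:ℝ)+((j:ℝ)+1) = (M:ℝ)+1 by rw [hMcast]; ring]
    have e1 : ((M:ℝ)+1)^(M+1) = ((M:ℝ)+1) * (((M:ℝ))^M * a) := by
      rw [ha, div_pow]
      field_simp
      ring
    have e2 : (((M+1).choose k : ℕ) : ℝ) * (k:ℝ)^k * ((j:ℝ)+1)^(j+1) * S2
        = ((M:ℝ)+1) * ((M.choose k : ℝ) * (k:ℝ)^k * (j:ℝ)^j * b * S2) := by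
      have hc : (((M+1).choose k : ℕ) : ℝ) * ((j:ℝ)+1) = ((M:ℝ)+1) * (M.choose k : ℝ) := by
        exact_mod_cast congrArg (Nat.cast : ℕ → ℝ) hCC
      have e3 : ((j:ℝ)+1)^j = (j:ℝ)^j * b := by
        rw [hb, div_pow]; field_simp
      calc (((M+1).choose k : ℕ) : ℝ) * (k:ℝ)^k * ((j:ℝ)+1)^(j+1) * S2
          = ((((M+1).choose k : ℕ) : ℝ) * ((j:ℝ)+1)) * (k:ℝ)^k * ((j:ℝ)+1)^j * S2 := by
            ring
        _ = (((M:ℝ)+1) * (M.choose k : ℝ)) * (k:ℝ)^k * ((j:ℝ)^j * b) * S2 := by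
            rw [hc, e3]
        _ = ((M:ℝ)+1) * ((M.choose k : ℝ) * (k:ℝ)^k * (j:ℝ)^j * b * S2) := by ring
    rw [e1, e2]
    exact mul_le_mul_of_nonneg_left h5 (by linarith)


/-- Ash's Lemma 4.7.1: a pointwise lower bound on binomial probabilities via
the Bernoulli Kullback–Leibler divergence. -/
theorem binomial_pointwise_kl_lower_bound (m k : ℕ) (hk1 : 1 ≤ k)
    (hk2 : k ≤ m - 1) (hm : 1 ≤ m) (p : ℝ) (hp0 : 0 < p) (hp1 : p < 1) :
    (m.choose k : ℝ) * p ^ k * (1 - p) ^ (m - k) ≥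
      Real.exp (-(m : ℝ) *
          ((k : ℝ) / m * Real.log (((k : ℝ) / m) / p) +
            (1 - (k : ℝ) / m) * Real.log ((1 - (k : ℝ) / m) / (1 - p)))) /
        Real.sqrt (8 * m * ((k : ℝ) / m) * (1 - (k : ℝ) / m)) := by
  have hkm : k < m := by omega
  set j := m - k with hj
  have hkj : k + j = m := by omega
  have hj1 : 1 ≤ j := by omega
  have hk0 : (0:ℝ) < k := by exact_mod_cast hk1
  have hj0 : (0:ℝ) < j := by exact_mod_cast hj1
  have hm0 : (0:ℝ) < m := by exact_mod_cast hm
  have hq0 : (0:ℝ) < 1 - p := by linarith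
  have hjr : (j:ℝ) = (m:ℝ) - k := by
    rw [hj]; push_cast [Nat.cast_sub hkm.le]; ring
  have hone : 1 - (k:ℝ)/m = (j:ℝ)/m := by
    rw [hjr]; field_simp
  rw [hone]
  have hSarg : 8 * (m:ℝ) * ((k:ℝ)/m) * ((j:ℝ)/m) = 8*(k:ℝ)*j/m := by
    field_simp
  rw [hSarg]
  set S := Real.sqrt (8*(k:ℝ)*j/(m:ℝ)) with hS
  have hSp : 0 < S := Real.sqrt_pos.2 (by positivity)
  -- compute the exponential
  have l1 : Real.log (((k:ℝ)/m)/p) = - Real.log (p*(m:ℝ)/k) := by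
    rw [show ((k:ℝ)/m)/p = (p*(m:ℝ)/k)⁻¹ by field_simp; try ring_nf; try tauto, Real.log_inv]
  have l2 : Real.log (((j:ℝ)/m)/(1-p)) = - Real.log ((1-p)*(m:ℝ)/j) := by
    rw [show ((j:ℝ)/m)/(1-p) = ((1-p)*(m:ℝ)/j)⁻¹ by field_simp; try ring_nf; try tauto, Real.log_inv]
  have hexp : Real.exp (-(m : ℝ) * ((k:ℝ)/m * Real.log (((k:ℝ)/m)/p)
        + ((j:ℝ)/m) * Real.log (((j:ℝ)/m)/(1-p))))
      = (p*(m:ℝ)/k)^k * ((1-p)*(m:ℝ)/j)^j := by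
    rw [l1, l2, show -(m:ℝ) * ((k:ℝ)/m * -Real.log (p*(m:ℝ)/k)
          + ((j:ℝ)/m) * -Real.log ((1-p)*(m:ℝ)/j))
        = (k:ℝ) * Real.log (p*(m:ℝ)/k) + (j:ℝ) * Real.log ((1-p)*(m:ℝ)/j) by
          field_simp; ring]
    rw [Real.exp_add, Real.exp_nat_mul, Real.exp_nat_mul,
      Real.exp_log (by positivity), Real.exp_log (by positivity)]
  rw [hexp]
  have hpow : (p*(m:ℝ)/k)^k * ((1-p)*(m:ℝ)/j)^j
      = p^k * (1-p)^j * ((m:ℝ)^m / ((k:ℝ)^k * (j:ℝ)^j)) := by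
    rw [div_pow, div_pow, mul_pow, mul_pow]
    rw [show (m:ℝ)^m = (m:ℝ)^k*(m:ℝ)^j by rw [← pow_add, hkj]]
    field_simp
  rw [hpow]
  -- use key
  have key' : (m:ℝ)^m ≤ (m.choose k : ℝ) * (k:ℝ)^k * (j:ℝ)^j * S := by
    have h := key k j hk1 hj1
    rw [hkj] at h
    rw [hS, show (k:ℝ)+(j:ℝ) = (m:ℝ) by rw [hjr]; ring] at *
    exact_mod_cast h
  have h9 : (m:ℝ)^m / ((k:ℝ)^k * (j:ℝ)^j) ≤ (m.choose k : ℝ) * S := by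
    rw [div_le_iff₀ (by positivity)]
    calc (m:ℝ)^m ≤ (m.choose k : ℝ) * (k:ℝ)^k * (j:ℝ)^j * S := key'
      _ = (m.choose k : ℝ) * S * ((k:ℝ)^k * (j:ℝ)^j) := by ring
  rw [ge_iff_le, div_le_iff₀ hSp]
  calc p^k * (1-p)^j * ((m:ℝ)^m / ((k:ℝ)^k * (j:ℝ)^j))
      ≤ p^k * (1-p)^j * ((m.choose k : ℝ) * S) := by
        apply mul_le_mul_of_nonneg_left h9 (by positivity)
    _ = (m.choose k : ℝ) * p^k * (1-p)^j * S := by ring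
end
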